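/- Let G_θ(w) = ∫₀^∞ e^{(θ-γ)s} s w^{s-1}/Γ(s+1) ds for w ∈ (0,1], where γ is the Euler–Mascheroni constant. Then as t → 0⁺, G_θ(t) = 1/(t (log(1/t))²) + (2θ + o(1))/(t (log(1/t))³). -/

import Mathlib

open Real Filter

noncomputable def Gtheta (θ : ℝ) (w : ℝ) : ℝ :=
  ∫ s in Set.Ioi (0:ℝ),
    Real.exp ((θ - Real.eulerMascheroniConstant) * s) * s * w ^ (s - 1) / Real.Gamma (s + 1)

section aux
open MeasureTheory Set

lemma intOn_pow_exp (n : ℕ) {a : ℝ} (ha : 0 < a) :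
    IntegrableOn (fun s : ℝ => s ^ n * Real.exp (-a * s)) (Set.Ioi 0) := by
  have h := integrableOn_rpow_mul_exp_neg_mul_rpow (s := (n:ℝ)) (p := 1) (b := a)
    (neg_one_lt_zero.trans_le (Nat.cast_nonneg n)) one_pos ha
  refine h.congr_fun (fun x hx => ?_) measurableSet_Ioi
  simp only [Real.rpow_natCast, Real.rpow_one]

lemma int_pow_exp (n : ℕ) {a : ℝ} (ha : 0 < a) :
    ∫ s in Set.Ioi (0:ℝ), s ^ n * Real.exp (-a * s) = (Nat.factorial n : ℝ) / a ^ (n+1) := by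
  have h := Real.integral_rpow_mul_exp_neg_mul_Ioi (a := (n:ℝ)+1) (r := a)
    (by positivity) ha
  rw [show ((n:ℝ)+1-1) = (n:ℝ) by ring] at h
  have h2 : ∫ s in Set.Ioi (0:ℝ), s ^ n * Real.exp (-a * s)
      = ∫ t in Set.Ioi (0:ℝ), t ^ (n:ℝ) * Real.exp (-(a * t)) := by
    refine setIntegral_congr_fun measurableSet_Ioi (fun x hx => ?_)
    rw [Real.rpow_natCast, neg_mul]
  rw [h2, h, show ((n:ℝ)+1) = ((n+1 : ℕ) : ℝ) by push_cast; ring, Real.rpow_natCast,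
    show ((n+1:ℕ):ℝ) = (n:ℝ)+1 by push_cast; ring, Real.Gamma_nat_eq_factorial]
  rw [one_div, inv_pow]
  ring

lemma gamma_ge {s : ℝ} (hs : 0 ≤ s) : Real.exp (-1) ≤ Real.Gamma (s+1) := by
  rw [Real.Gamma_eq_integral (by linarith : (0:ℝ) < s + 1)]
  have hint : IntegrableOn (fun x : ℝ => Real.exp (-x) * x ^ (s+1-1)) (Set.Ioi 0) :=
    Real.GammaIntegral_convergent (by linarith)
  have hint1 : IntegrableOn (fun x : ℝ => Real.exp (-x) * x ^ (s+1-1)) (Set.Ioi 1) :=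
    hint.mono_set (Set.Ioi_subset_Ioi zero_le_one)
  have hexp : IntegrableOn (fun x : ℝ => Real.exp (-x)) (Set.Ioi 1) := by
    have := exp_neg_integrableOn_Ioi (1:ℝ) (zero_lt_one (α := ℝ))
    refine this.congr_fun (fun x _ => by simp only [neg_one_mul]) measurableSet_Ioi
  have h1 : ∫ x in Set.Ioi (1:ℝ), Real.exp (-x)
      ≤ ∫ x in Set.Ioi (1:ℝ), Real.exp (-x) * x ^ (s+1-1) := by
    refine setIntegral_mono_on hexp hint1 measurableSet_Ioi (fun x hx => ?_)
    nth_rewrite 1 [← mul_one (Real.exp (-x))]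
    refine mul_le_mul_of_nonneg_left ?_ (Real.exp_nonneg _)
    exact Real.one_le_rpow (le_of_lt hx) (by linarith)
  have h2 : ∫ x in Set.Ioi (1:ℝ), Real.exp (-x) * x ^ (s+1-1)
      ≤ ∫ x in Set.Ioi (0:ℝ), Real.exp (-x) * x ^ (s+1-1) := by
    refine setIntegral_mono_set hint ?_ ((Set.Ioi_subset_Ioi zero_le_one).eventuallyLE)
    filter_upwards [ae_restrict_mem measurableSet_Ioi] with x hx
    exact mul_nonneg (Real.exp_nonneg _) (Real.rpow_nonneg (le_of_lt hx) _)
  calc Real.exp (-1) = ∫ x in Set.Ioi (1:ℝ), Real.exp (-x) := (integral_exp_neg_Ioi 1).symm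
    _ ≤ _ := le_trans h1 h2

lemma invgamma_le {s : ℝ} (hs : 0 ≤ s) : (Real.Gamma (s+1))⁻¹ ≤ Real.exp 1 := by
  have h := gamma_ge hs
  have h0 : (0:ℝ) < Real.exp (-1) := Real.exp_pos _
  calc (Real.Gamma (s+1))⁻¹ ≤ (Real.exp (-1))⁻¹ := by
        exact inv_anti₀ h0 h
    _ = Real.exp 1 := by rw [← Real.exp_neg]; norm_num

lemma invgamma_pos {s : ℝ} (hs : 0 ≤ s) : 0 < (Real.Gamma (s+1))⁻¹ :=
  inv_pos.2 (Real.Gamma_pos_of_pos (by linarith))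

lemma hasDerivAt_invgamma :
    HasDerivAt (fun s : ℝ => (Real.Gamma (s+1))⁻¹) Real.eulerMascheroniConstant 0 := by
  have h1 : HasDerivAt (fun s : ℝ => Real.Gamma (s+1)) (-Real.eulerMascheroniConstant) 0 := by
    have h := Real.hasDerivAt_Gamma_one
    have hc : HasDerivAt (fun s : ℝ => s + 1) 1 0 := (hasDerivAt_id 0).add_const 1
    have h2 := HasDerivAt.comp (0:ℝ) (show HasDerivAt Real.Gamma _ ((fun s:ℝ => s+1) 0) by simpa using h) hc
    simpa [Function.comp_def] using h2
  have h2 := h1.inv (by simp [Real.Gamma_one])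
  simpa [Real.Gamma_one, Pi.inv_def] using h2

lemma littleO_h :
    (fun s : ℝ => (Real.Gamma (s+1))⁻¹ - 1 - Real.eulerMascheroniConstant * s)
      =o[nhds 0] (fun s : ℝ => s) := by
  have h := hasDerivAt_invgamma
  rw [hasDerivAt_iff_isLittleO] at h
  simpa [Real.Gamma_one, mul_comm] using h

noncomputable def Ffun (a : ℝ) : ℝ :=
  ∫ s in Set.Ioi (0:ℝ), s * Real.exp (-a * s) * (Real.Gamma (s+1))⁻¹

noncomputable def Efun (a : ℝ) : ℝ :=
  ∫ s in Set.Ioi (0:ℝ), s * Real.exp (-a * s) *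
    ((Real.Gamma (s+1))⁻¹ - 1 - Real.eulerMascheroniConstant * s)


lemma contOn_invgamma : ContinuousOn (fun s : ℝ => (Real.Gamma (s+1))⁻¹) (Set.Ioi 0) := by
  intro s hs
  have h1 : ContinuousAt (fun s : ℝ => Real.Gamma (s+1)) s := by
    have hg : ContinuousAt Real.Gamma (s+1) := by
      refine (Real.differentiableAt_Gamma ?_).continuousAt
      intro m
      have : (0:ℝ) < s + 1 := by have := mem_Ioi.1 hs; linarith
      have hm : -(m:ℝ) ≤ 0 := neg_nonpos.2 (Nat.cast_nonneg m)
      linarith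
    have : ContinuousAt (fun s : ℝ => s + 1) s := by fun_prop
    exact ContinuousAt.comp (g := Real.Gamma) (f := fun s : ℝ => s + 1) hg this
  exact ((h1.inv₀ (by
    have : (0:ℝ) < s + 1 := by have := mem_Ioi.1 hs; linarith
    exact (Real.Gamma_pos_of_pos this).ne')).continuousWithinAt)

lemma intOn_F {a : ℝ} (ha : 0 < a) :
    IntegrableOn (fun s : ℝ => s * Real.exp (-a * s) * (Real.Gamma (s+1))⁻¹) (Set.Ioi 0) := by
  have hg : Integrable (fun s : ℝ => Real.exp 1 * (s ^ 1 * Real.exp (-a * s)))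
      (volume.restrict (Set.Ioi 0)) := (intOn_pow_exp 1 ha).const_mul _
  refine Integrable.mono' hg ?_ ?_
  · refine ContinuousOn.aestronglyMeasurable ?_ measurableSet_Ioi
    exact (((continuous_id.continuousOn).mul (by fun_prop)).mul contOn_invgamma)
  · filter_upwards [ae_restrict_mem measurableSet_Ioi] with s hs
    have hs0 : (0:ℝ) < s := hs
    have h1 : 0 ≤ s * Real.exp (-a * s) := by positivity
    rw [Real.norm_eq_abs, abs_of_nonneg (by nlinarith [invgamma_pos hs0.le])]
    have := invgamma_le hs0.le
    calc s * Real.exp (-a*s) * (Real.Gamma (s+1))⁻¹ ≤ s * Real.exp (-a*s) * Real.exp 1 :=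
          mul_le_mul_of_nonneg_left this h1
      _ = Real.exp 1 * (s ^ 1 * Real.exp (-a * s)) := by ring

lemma intOn_E {a : ℝ} (ha : 0 < a) :
    IntegrableOn (fun s : ℝ => s * Real.exp (-a * s) *
      ((Real.Gamma (s+1))⁻¹ - 1 - Real.eulerMascheroniConstant * s)) (Set.Ioi 0) := by
  have h := ((intOn_F ha).sub (intOn_pow_exp 1 ha)).sub ((intOn_pow_exp 2 ha).const_mul
    Real.eulerMascheroniConstant)
  refine h.congr (Filter.Eventually.of_forall (fun s => ?_))
  simp only [Pi.sub_apply]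
  ring


lemma F_eq {a : ℝ} (ha : 0 < a) :
    Ffun a = 1/a^2 + 2*Real.eulerMascheroniConstant/a^3 + Efun a := by
  have hsub : Ffun a - Efun a
      = ∫ s in Set.Ioi (0:ℝ), (s * Real.exp (-a*s) * (Real.Gamma (s+1))⁻¹
        - s * Real.exp (-a*s) * ((Real.Gamma (s+1))⁻¹ - 1 - Real.eulerMascheroniConstant * s)) :=
    (integral_sub (intOn_F ha) (intOn_E ha)).symm
  have h2 : ∫ s in Set.Ioi (0:ℝ), (s * Real.exp (-a*s) * (Real.Gamma (s+1))⁻¹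
        - s * Real.exp (-a*s) * ((Real.Gamma (s+1))⁻¹ - 1 - Real.eulerMascheroniConstant * s))
      = ∫ s in Set.Ioi (0:ℝ), (s ^ 1 * Real.exp (-a*s)
          + Real.eulerMascheroniConstant * (s ^ 2 * Real.exp (-a*s))) := by
    refine setIntegral_congr_fun measurableSet_Ioi (fun s _ => ?_)
    ring
  have h3 : ∫ s in Set.Ioi (0:ℝ), (s ^ 1 * Real.exp (-a*s)
          + Real.eulerMascheroniConstant * (s ^ 2 * Real.exp (-a*s)))
      = 1/a^2 + 2*Real.eulerMascheroniConstant/a^3 := by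
    rw [integral_add (intOn_pow_exp 1 ha) ((intOn_pow_exp 2 ha).const_mul _),
      MeasureTheory.integral_const_mul, int_pow_exp 1 ha, int_pow_exp 2 ha]
    norm_num
    ring
  have := hsub.trans (h2.trans h3)
  linarith

lemma key_tendsto : Tendsto (fun a : ℝ => a^3 * Efun a) atTop (nhds 0) := by
  rw [NormedAddCommGroup.tendsto_nhds_zero]
  intro ε hε
  set C : ℝ := Real.exp 1 + 1 with hC
  have hC0 : 0 < C := by positivity
  have hγ : Real.eulerMascheroniConstant < 1 := by
    have := Real.eulerMascheroniConstant_lt_two_thirds; linarith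
  have hγ0 : 0 ≤ Real.eulerMascheroniConstant := by
    have := Real.eulerMascheroniSeq_lt_eulerMascheroniConstant 0
    simp [Real.eulerMascheroniSeq] at this
    linarith
  obtain ⟨δ, hδ0, hδ⟩ : ∃ δ > 0, ∀ s : ℝ, dist s 0 < δ →
      ‖(Real.Gamma (s+1))⁻¹ - 1 - Real.eulerMascheroniConstant * s‖ ≤ ε/8 * ‖s‖ := by
    have h := (Asymptotics.isLittleO_iff.1 littleO_h) (c := ε/8) (by linarith)
    rw [Metric.eventually_nhds_iff] at h
    obtain ⟨δ, hδ0, h⟩ := h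
    exact ⟨δ, hδ0, fun s hs => h hs⟩
  -- main bound for a > 0
  have hbound : ∀ a : ℝ, 0 < a → |Efun a| ≤
      ε/8 * (2/a^3) + C * Real.exp (-(a/2) * δ) * (4/a^2 + 16/a^3) := by
    intro a ha
    have ha2 : (0:ℝ) < a/2 := by linarith
    set G : ℝ → ℝ := fun s => ε/8 * (s^2 * Real.exp (-a*s))
      + (C * Real.exp (-(a/2) * δ)) * (s^1 * Real.exp (-(a/2)*s) + s^2 * Real.exp (-(a/2)*s))
      with hG
    have hGint : IntegrableOn G (Set.Ioi 0) := by
      exact (((intOn_pow_exp 2 ha).const_mul _).add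
        (((intOn_pow_exp 1 ha2).add (intOn_pow_exp 2 ha2)).const_mul _))
    have h1 : |Efun a| ≤ ∫ s in Set.Ioi (0:ℝ),
        ‖s * Real.exp (-a * s) * ((Real.Gamma (s+1))⁻¹ - 1 - Real.eulerMascheroniConstant * s)‖ := by
      rw [← Real.norm_eq_abs]
      exact norm_integral_le_integral_norm _
    have h2 : ∫ s in Set.Ioi (0:ℝ),
        ‖s * Real.exp (-a * s) * ((Real.Gamma (s+1))⁻¹ - 1 - Real.eulerMascheroniConstant * s)‖
        ≤ ∫ s in Set.Ioi (0:ℝ), G s := by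
      refine setIntegral_mono_on (intOn_E ha).norm hGint measurableSet_Ioi (fun s hs => ?_)
      have hs0 : (0:ℝ) < s := hs
      have hexp : (0:ℝ) < Real.exp (-a*s) := Real.exp_pos _
      rw [norm_mul, norm_mul, Real.norm_eq_abs, Real.norm_eq_abs, Real.norm_eq_abs,
        abs_of_pos hs0, abs_of_pos hexp]
      rcases lt_or_ge s δ with hsd | hsd
      · have := hδ s (by rwa [Real.dist_eq, sub_zero, abs_of_pos hs0])
        rw [Real.norm_eq_abs, Real.norm_eq_abs, abs_of_pos hs0] at this
        have hterm2 : 0 ≤ (C * Real.exp (-(a/2) * δ))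
            * (s^1 * Real.exp (-(a/2)*s) + s^2 * Real.exp (-(a/2)*s)) := by positivity
        have : s * Real.exp (-a*s) * |(Real.Gamma (s+1))⁻¹ - 1 - Real.eulerMascheroniConstant * s|
            ≤ ε/8 * (s^2 * Real.exp (-a*s)) := by nlinarith [mul_le_mul_of_nonneg_left this (by positivity : (0:ℝ) ≤ s * Real.exp (-a*s))]
        rw [hG]; dsimp only; linarith
      · have habs : |(Real.Gamma (s+1))⁻¹ - 1 - Real.eulerMascheroniConstant * s| ≤ C * (1 + s) := by
          have h1 := invgamma_le hs0.le
          have h2 := invgamma_pos hs0.le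
          rw [abs_le]
          constructor <;> nlinarith
        have hsplit : Real.exp (-a*s) ≤ Real.exp (-(a/2)*δ) * Real.exp (-(a/2)*s) := by
          rw [← Real.exp_add]
          apply Real.exp_le_exp.2
          nlinarith
        have hterm1 : 0 ≤ ε/8 * (s^2 * Real.exp (-a*s)) := by positivity
        have hmain : s * Real.exp (-a*s) * |(Real.Gamma (s+1))⁻¹ - 1 - Real.eulerMascheroniConstant * s|
            ≤ (C * Real.exp (-(a/2) * δ)) * (s^1 * Real.exp (-(a/2)*s) + s^2 * Real.exp (-(a/2)*s)) := by
          calc s * Real.exp (-a*s) * |(Real.Gamma (s+1))⁻¹ - 1 - Real.eulerMascheroniConstant * s|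
              ≤ s * Real.exp (-a*s) * (C * (1+s)) :=
                mul_le_mul_of_nonneg_left habs (by positivity)
            _ ≤ s * (Real.exp (-(a/2)*δ) * Real.exp (-(a/2)*s)) * (C * (1+s)) := by
                have h4 := mul_le_mul_of_nonneg_right
                  (mul_le_mul_of_nonneg_left hsplit hs0.le)
                  (by positivity : (0:ℝ) ≤ C * (1+s))
                linarith
            _ = (C * Real.exp (-(a/2) * δ)) * (s^1 * Real.exp (-(a/2)*s) + s^2 * Real.exp (-(a/2)*s)) := by
                ring
        rw [hG]; dsimp only; linarith
    have h3 : ∫ s in Set.Ioi (0:ℝ), G s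
        = ε/8 * (2/a^3) + C * Real.exp (-(a/2) * δ) * (4/a^2 + 16/a^3) := by
      have hI1 : IntegrableOn (fun s : ℝ => ε/8 * (s^2 * Real.exp (-a*s))) (Set.Ioi 0) :=
        (intOn_pow_exp 2 ha).const_mul _
      have hI2 : IntegrableOn (fun s : ℝ => (C * Real.exp (-(a/2) * δ))
          * (s^1 * Real.exp (-(a/2)*s) + s^2 * Real.exp (-(a/2)*s))) (Set.Ioi 0) :=
        ((intOn_pow_exp 1 ha2).add (intOn_pow_exp 2 ha2)).const_mul _
      rw [hG]
      rw [integral_add hI1 hI2, MeasureTheory.integral_const_mul, MeasureTheory.integral_const_mul,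
        integral_add (intOn_pow_exp 1 ha2) (intOn_pow_exp 2 ha2),
        int_pow_exp 2 ha, int_pow_exp 1 ha2, int_pow_exp 2 ha2]
      have e1 : ((Nat.factorial 1 : ℕ) : ℝ) = 1 := by norm_num [Nat.factorial]
      have e2 : ((Nat.factorial 2 : ℕ) : ℝ) = 2 := by norm_num [Nat.factorial]
      rw [e1, e2]
      field_simp
      ring
    linarith [h1, h2.trans_eq h3]
  -- tail tendsto 0
  have htail : Tendsto (fun a : ℝ => C * Real.exp (-(a/2) * δ) * (4*a + 16)) atTop (nhds 0) := by
    have hb : (0:ℝ) < δ/2 := by linarith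
    have t1 : Tendsto (fun a : ℝ => a * Real.exp (-(δ/2) * a)) atTop (nhds 0) := by
      have := tendsto_rpow_mul_exp_neg_mul_atTop_nhds_zero 1 (δ/2) hb
      refine this.congr' ?_
      filter_upwards [eventually_gt_atTop (0:ℝ)] with a ha
      rw [Real.rpow_one]
    have t2 : Tendsto (fun a : ℝ => Real.exp (-(δ/2) * a)) atTop (nhds 0) := by
      have := tendsto_rpow_mul_exp_neg_mul_atTop_nhds_zero 0 (δ/2) hb
      refine this.congr' ?_
      filter_upwards [eventually_gt_atTop (0:ℝ)] with a ha
      rw [Real.rpow_zero, one_mul]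
    have := ((t1.const_mul (4*C)).add (t2.const_mul (16*C)))
    simp only [add_zero, mul_zero] at this
    refine this.congr (fun a => ?_)
    have : -(δ/2) * a = -(a/2) * δ := by ring
    rw [← this]
    ring
  have hev : ∀ᶠ a : ℝ in atTop, ‖a^3 * Efun a‖ < ε := by
    filter_upwards [eventually_ge_atTop (1:ℝ),
      htail.eventually_lt_const (by linarith : (0:ℝ) < ε/2) ] with a ha1 htl
    have ha : (0:ℝ) < a := by linarith
    have hb := hbound a ha
    have hmul : a^3 * |Efun a| ≤ a^3 * (ε/8 * (2/a^3) + C * Real.exp (-(a/2) * δ) * (4/a^2 + 16/a^3)) :=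
      mul_le_mul_of_nonneg_left hb (by positivity)
    have heq : a^3 * (ε/8 * (2/a^3) + C * Real.exp (-(a/2) * δ) * (4/a^2 + 16/a^3))
        = ε/4 + C * Real.exp (-(a/2) * δ) * (4*a + 16) / a^0 * 1 := by
      field_simp
      ring
    rw [norm_mul, Real.norm_eq_abs, Real.norm_eq_abs, abs_of_pos (by positivity : (0:ℝ) < a^3)]
    simp only [pow_zero, div_one, mul_one] at heq
    calc a^3 * |Efun a| ≤ _ := hmul
      _ = ε/4 + C * Real.exp (-(a/2) * δ) * (4*a + 16) := heq
      _ < ε/4 + ε/2 := by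
          have : C * Real.exp (-(a/2) * δ) * (4*a + 16) < ε/2 := htl
          linarith
      _ < ε := by linarith
  exact hev

lemma inv_pow_tendsto (n : ℕ) (hn : n ≠ 0) (K : ℝ) :
    Tendsto (fun a : ℝ => K / a ^ n) atTop (nhds 0) := by
  have h := (tendsto_pow_atTop hn).inv_tendsto_atTop (α := ℝ)
  have := h.const_mul K
  rw [mul_zero] at this
  refine this.congr (fun a => ?_)
  simp [div_eq_mul_inv]

lemma psi_tendsto (θ : ℝ) :
    Tendsto (fun a : ℝ => (a + (θ - Real.eulerMascheroniConstant))^3 * Ffun a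
      - (a + (θ - Real.eulerMascheroniConstant)) - 2*θ) atTop (nhds 0) := by
  set γ' := Real.eulerMascheroniConstant with hγ'
  set c := θ - γ' with hc
  have hfrac : Tendsto (fun a : ℝ => ((a+c)/a)^3) atTop (nhds 1) := by
    have h1 : Tendsto (fun a : ℝ => 1 + c/a) atTop (nhds 1) := by
      have := (inv_pow_tendsto 1 one_ne_zero c).const_add 1
      rw [add_zero] at this
      simpa [pow_one] using this
    have h2 := h1.pow 3
    rw [one_pow] at h2
    refine h2.congr' ?_
    filter_upwards [eventually_gt_atTop (0:ℝ)] with a ha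
    rw [add_div, div_self ha.ne']
  have hprod : Tendsto (fun a : ℝ => ((a+c)/a)^3 * (a^3 * Efun a)) atTop (nhds 0) := by
    have := hfrac.mul key_tendsto
    rwa [mul_zero] at this
  have hQ : Tendsto (fun a : ℝ => 3*c^2/a^1 + c^3/a^2 + 6*γ'*c/a^1 + 6*γ'*c^2/a^2 + 2*γ'*c^3/a^3
      + ((a+c)/a)^3 * (a^3 * Efun a)) atTop (nhds 0) := by
    have h1 := inv_pow_tendsto 1 one_ne_zero (3*c^2)
    have h2 := inv_pow_tendsto 2 two_ne_zero (c^3)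
    have h3 := inv_pow_tendsto 1 one_ne_zero (6*γ'*c)
    have h4 := inv_pow_tendsto 2 two_ne_zero (6*γ'*c^2)
    have h5 := inv_pow_tendsto 3 three_ne_zero (2*γ'*c^3)
    have h := ((((h1.add h2).add h3).add h4).add h5).add hprod
    simpa using h
  refine hQ.congr' ?_
  filter_upwards [eventually_gt_atTop (0:ℝ)] with a ha
  rw [F_eq ha]
  have h2θ : 2*θ = 2*c + 2*γ' := by rw [hc]; ring
  rw [h2θ]
  field_simp
  ring

end aux

section main
open MeasureTheory Set

theorem stmt_17 (θ : ℝ) :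
    ∃ ε : ℝ → ℝ, Tendsto ε (nhdsWithin 0 (Set.Ioi 0)) (nhds 0) ∧
      ∀ᶠ t in nhdsWithin (0:ℝ) (Set.Ioi 0),
        Gtheta θ t = 1 / (t * (Real.log (1 / t)) ^ 2)
          + (2 * θ + ε t) / (t * (Real.log (1 / t)) ^ 3) := by
  set γ' := Real.eulerMascheroniConstant with hγ'
  set A : ℝ → ℝ := fun t => Real.log (1/t) - θ + γ' with hA
  refine ⟨fun t => (A t + (θ - γ'))^3 * Ffun (A t) - (A t + (θ - γ')) - 2*θ, ?_, ?_⟩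
  · -- tendsto
    have hAtop : Tendsto A (nhdsWithin 0 (Set.Ioi 0)) atTop := by
      have h1 : Tendsto (fun t : ℝ => Real.log (1/t)) (nhdsWithin 0 (Set.Ioi 0)) atTop := by
        have h := Real.tendsto_log_nhdsGT_zero
        have h2 : Tendsto (fun t : ℝ => -Real.log t) (nhdsWithin 0 (Set.Ioi 0)) atTop :=
          tendsto_neg_atBot_atTop.comp h
        refine h2.congr (fun t => ?_)
        rw [one_div, Real.log_inv]
      have h2 := tendsto_atTop_add_const_right _ (-θ) h1
      have h3 := tendsto_atTop_add_const_right _ γ' h2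
      refine h3.congr (fun t => ?_)
      rw [hA]; ring
    exact (psi_tendsto θ).comp hAtop
  · filter_upwards [Ioo_mem_nhdsGT_of_mem (by norm_num : (0:ℝ) ∈ Set.Ico (0:ℝ) 1)]
      with t ht
    obtain ⟨ht0, ht1⟩ := ht
    set L := Real.log (1/t) with hL
    have hlogt : Real.log t = -L := by rw [hL, one_div, Real.log_inv, neg_neg]
    have hLpos : 0 < L := by
      rw [hL]
      exact Real.log_pos (one_lt_one_div ht0 ht1)
    have hAc : A t + (θ - γ') = L := by rw [hA]; ring
    have hG : Gtheta θ t = (1/t) * Ffun (A t) := by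
      rw [Gtheta, Ffun, ← MeasureTheory.integral_const_mul]
      refine setIntegral_congr_fun measurableSet_Ioi (fun s hs => ?_)
      rw [Real.rpow_def_of_pos ht0]
      have hexp1 : Real.exp ((θ - γ') * s) * s * Real.exp (Real.log t * (s-1)) / Real.Gamma (s+1)
          = Real.exp ((θ - γ') * s + Real.log t * (s-1)) * (s * (Real.Gamma (s+1))⁻¹) := by
        rw [Real.exp_add]; ring
      rw [hexp1]
      have hinvt : (1:ℝ)/t = Real.exp (-Real.log t) := by
        rw [Real.exp_neg, Real.exp_log ht0, one_div]
      rw [hinvt]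
      have hexp2 : Real.exp (-Real.log t) * (s * Real.exp (-(A t) * s) * (Real.Gamma (s+1))⁻¹)
          = Real.exp (-Real.log t + -(A t) * s) * (s * (Real.Gamma (s+1))⁻¹) := by
        rw [Real.exp_add]; ring
      rw [hexp2]
      have harg : (θ - γ') * s + Real.log t * (s-1) = -Real.log t + -(A t) * s := by
        rw [hA]; dsimp only; rw [hlogt, ← hL]; ring
      rw [harg]
    rw [hG, hAc]
    have htne : t ≠ 0 := ht0.ne'
    have hLne : L ≠ 0 := hLpos.ne'
    field_simp
    ring

end main
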